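/- Let $c>0$, $p>0$, and let $X:(0,\infty)\to[0,\infty)$ be differentiable with $\frac{d}{dt}(e^{ct}X(t))\le 0$ for $t>0$. Then for every $t>0$, $t^p X(t)+p\int_t^\infty r^{p-1}X(r)\,dr\le c\,X(t)\,e^{ct}\int_t^\infty r^p e^{-cr}\,dr$. -/

import Mathlib

open MeasureTheory Set

/-- Key pointwise estimate: if `X ≥ 0` is differentiable with `(e^{ct}X(t))' ≤ 0`, then
`t^p X(t) + p ∫_t^∞ r^{p-1} X(r) dr ≤ c X(t) e^{ct} ∫_t^∞ r^p e^{-cr} dr`. -/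
theorem stmt3 (c p : ℝ) (hc : 0 < c) (hp : 0 < p) (X : ℝ → ℝ)
    (hXpos : ∀ t > 0, 0 ≤ X t)
    (hXdiff : ∀ t > 0, DifferentiableAt ℝ X t)
    (hXe : ∀ t > 0, deriv (fun s => Real.exp (c * s) * X s) t ≤ 0) :
    ∀ t > (0 : ℝ),
      t ^ p * X t + p * ∫ r in Ioi t, r ^ (p - 1) * X r ≤
        c * X t * Real.exp (c * t) * ∫ r in Ioi t, r ^ p * Real.exp (-(c * r)) := by
  intro t ht
  -- the function g(s) = e^{cs} X(s) is antitone on [t, ∞)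
  set g : ℝ → ℝ := fun s => Real.exp (c * s) * X s with hgdef
  have hdg : ∀ s : ℝ, 0 < s → DifferentiableAt ℝ g s := fun s hs =>
    ((differentiableAt_id.const_mul c).exp).mul (hXdiff s hs)
  have hganti : AntitoneOn g (Ici t) := by
    apply antitoneOn_of_deriv_nonpos (convex_Ici t)
    · exact fun s hs => ((hdg s (lt_of_lt_of_le ht hs)).continuousAt).continuousWithinAt
    · intro s hs
      rw [interior_Ici] at hs
      exact (hdg s (ht.trans hs)).differentiableWithinAt
    · intro s hs
      rw [interior_Ici] at hs
      exact hXe s (ht.trans hs)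
  -- pointwise bound
  have hbound : ∀ r ∈ Ioi t, X r ≤ X t * Real.exp (c * t) * Real.exp (-(c * r)) := by
    intro r hr
    have h1 : Real.exp (c * r) * X r ≤ Real.exp (c * t) * X t :=
      hganti self_mem_Ici (mem_Ici.mpr (le_of_lt hr)) (le_of_lt hr)
    have h2 : (0:ℝ) < Real.exp (-(c * r)) := Real.exp_pos _
    calc X r = Real.exp (-(c * r)) * (Real.exp (c * r) * X r) := by
          rw [← mul_assoc, ← Real.exp_add]; simp
      _ ≤ Real.exp (-(c * r)) * (Real.exp (c * t) * X t) :=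
          mul_le_mul_of_nonneg_left h1 h2.le
      _ = X t * Real.exp (c * t) * Real.exp (-(c * r)) := by ring
  -- integrability of r^q e^{-cr} on (t, ∞)
  have hint : ∀ q : ℝ, -1 < q →
      IntegrableOn (fun r : ℝ => r ^ q * Real.exp (-(c * r))) (Ioi t) := by
    intro q hq
    have h0 : IntegrableOn (fun x : ℝ => x ^ q * Real.exp (-c * x ^ (1:ℝ))) (Ioi 0) :=
      integrableOn_rpow_mul_exp_neg_mul_rpow hq zero_lt_one hc
    have h2 : IntegrableOn (fun r : ℝ => r ^ q * Real.exp (-(c * r))) (Ioi 0) := by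
      refine h0.congr_fun (fun x hx => ?_) measurableSet_Ioi
      simp only [Real.rpow_one, neg_mul]
    exact h2.mono_set (Ioi_subset_Ioi ht.le)
  have hip : IntegrableOn (fun r : ℝ => r ^ p * Real.exp (-(c * r))) (Ioi t) :=
    hint p (by linarith)
  have hip1 : IntegrableOn (fun r : ℝ => r ^ (p-1) * Real.exp (-(c * r))) (Ioi t) :=
    hint (p-1) (by linarith)
  -- FTC on (t, ∞) for F r = -(r^p e^{-cr})
  have hFTC :
      (∫ r in Ioi t, (c * (r ^ p * Real.exp (-(c * r))) -
        p * (r ^ (p-1) * Real.exp (-(c * r))))) =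
        0 - (-(t ^ p * Real.exp (-(c * t)))) := by
    apply integral_Ioi_of_hasDerivAt_of_tendsto'
      (f := fun r => -(r ^ p * Real.exp (-(c * r))))
    · intro x hx
      have hx0 : (0:ℝ) < x := lt_of_lt_of_le ht hx
      have h1 : HasDerivAt (fun r : ℝ => r ^ p) (p * x ^ (p-1)) x :=
        Real.hasDerivAt_rpow_const (Or.inl hx0.ne')
      have h2 : HasDerivAt (fun r : ℝ => Real.exp (-(c * r)))
          (Real.exp (-(c * x)) * (-c)) x := by
        have : HasDerivAt (fun r : ℝ => -(c * r)) (-c) x := by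
          simpa using ((hasDerivAt_id x).const_mul c).fun_neg
        exact this.exp
      have := (h1.fun_mul h2).fun_neg
      convert this using 1
      ring
    · have := ((hip.const_mul c).sub (hip1.const_mul p))
      exact this
    · have h := (tendsto_rpow_mul_exp_neg_mul_atTop_nhds_zero p c hc).neg
      rw [neg_zero] at h
      refine h.congr (fun x => ?_)
      rw [neg_mul]
  have key : c * (∫ r in Ioi t, r ^ p * Real.exp (-(c * r))) =
      t ^ p * Real.exp (-(c * t)) +
        p * ∫ r in Ioi t, r ^ (p-1) * Real.exp (-(c * r)) := by
    rw [integral_sub (hip.const_mul c) (hip1.const_mul p),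
      integral_const_mul, integral_const_mul] at hFTC
    linarith
  -- comparison of integrals
  have hmono : (∫ r in Ioi t, r ^ (p-1) * X r) ≤
      ∫ r in Ioi t, X t * Real.exp (c * t) * (r ^ (p-1) * Real.exp (-(c * r))) := by
    apply integral_mono_of_nonneg
    · refine (ae_restrict_iff' measurableSet_Ioi).mpr (ae_of_all _ fun r hr => ?_)
      have hr0 : (0:ℝ) < r := ht.trans hr
      exact mul_nonneg (Real.rpow_nonneg hr0.le _) (hXpos r hr0)
    · exact hip1.const_mul _
    · refine (ae_restrict_iff' measurableSet_Ioi).mpr (ae_of_all _ fun r hr => ?_)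
      have hr0 : (0:ℝ) < r := ht.trans hr
      calc r ^ (p-1) * X r
          ≤ r ^ (p-1) * (X t * Real.exp (c * t) * Real.exp (-(c * r))) :=
            mul_le_mul_of_nonneg_left (hbound r hr) (Real.rpow_nonneg hr0.le _)
        _ = X t * Real.exp (c * t) * (r ^ (p-1) * Real.exp (-(c * r))) := by ring
  rw [integral_const_mul] at hmono
  have hXt : 0 ≤ X t := hXpos t ht
  have hexp : Real.exp (c * t) * Real.exp (-(c * t)) = 1 := by
    rw [← Real.exp_add]; simp
  have hrhs : c * X t * Real.exp (c * t) * (∫ r in Ioi t, r ^ p * Real.exp (-(c * r))) =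
      t ^ p * X t +
        p * (X t * Real.exp (c * t) * ∫ r in Ioi t, r ^ (p-1) * Real.exp (-(c * r))) := by
    have : c * X t * Real.exp (c * t) * (∫ r in Ioi t, r ^ p * Real.exp (-(c * r))) =
        X t * Real.exp (c * t) * (c * ∫ r in Ioi t, r ^ p * Real.exp (-(c * r))) := by ring
    rw [this, key]
    have h2 : X t * Real.exp (c * t) * (t ^ p * Real.exp (-(c * t))) = t ^ p * X t := by
      calc X t * Real.exp (c * t) * (t ^ p * Real.exp (-(c * t)))
          = t ^ p * X t * (Real.exp (c * t) * Real.exp (-(c * t))) := by ring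
        _ = t ^ p * X t := by rw [hexp, mul_one]
    rw [mul_add, h2]
    ring
  rw [hrhs]
  have := mul_le_mul_of_nonneg_left hmono hp.le
  linarith
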